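/- Let $K_t(x,y)$ be a measurable kernel on $\mathbb{R}^n\times\mathbb{R}^n$ satisfying the Gaussian bound $|K_t(y,z)|\le C t^{-n}e^{-|y-z|^2/(c t^2)}$, and let $\varphi$ be Lipschitz (with $\nabla\varphi$ locally integrable). Then for any $x_0\in\mathbb{R}^n$, $r>0$, and any $y$ with $|y-x_0|\le r$, $\big|\int_{\mathbb{R}^n}K_r(y,z)\big(\varphi(z)-(\varphi)_{B(x_0,2r)}\big)dz\big|\le C' r\, M(\nabla\varphi)(x_0)$, where $(\varphi)_{B}$ is the average of $\varphi$ over $B$ and $M$ is the Hardy–Littlewood maximal operator. -/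

import Mathlib

set_option maxHeartbeats 1000000

open MeasureTheory Metric Set
open scoped ENNReal NNReal

/-- The (centered) Hardy–Littlewood maximal function of `g`. -/
noncomputable def HLMaximal {n : ℕ} (g : EuclideanSpace ℝ (Fin n) → ℝ)
    (x : EuclideanSpace ℝ (Fin n)) : ℝ≥0∞ :=
  ⨆ (r : ℝ) (_ : 0 < r),
    (volume (ball x r))⁻¹ * ∫⁻ y in ball x r, ENNReal.ofReal |g y| ∂volume

namespace GKP

variable {n : ℕ}

local notation "E" => EuclideanSpace ℝ (Fin n)


lemma vol_ball (x₀ : E) {ρ : ℝ} (hρ : 0 < ρ) :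
    volume (ball x₀ ρ) = ENNReal.ofReal (ρ ^ n) * volume (ball (0 : E) 1) := by
  simpa [finrank_euclideanSpace_fin] using
    Measure.addHaar_ball_of_pos (volume : Measure E) x₀ hρ

lemma maximal_ball (g : E → ℝ) (x₀ : E) {ρ : ℝ} (hρ : 0 < ρ) :
    ∫⁻ u in ball x₀ ρ, ENNReal.ofReal |g u| ∂volume
      ≤ volume (ball x₀ ρ) * HLMaximal g x₀ := by
  have h0 : volume (ball x₀ ρ) ≠ 0 := (measure_ball_pos volume x₀ hρ).ne'
  have ht : volume (ball x₀ ρ) ≠ ⊤ := measure_ball_lt_top.ne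
  have h1 : (volume (ball x₀ ρ))⁻¹ * ∫⁻ u in ball x₀ ρ, ENNReal.ofReal |g u| ∂volume
      ≤ HLMaximal g x₀ := le_iSup₂ (f := fun (r : ℝ) (_ : 0 < r) =>
        (volume (ball x₀ r))⁻¹ * ∫⁻ u in ball x₀ r, ENNReal.ofReal |g u| ∂volume) ρ hρ
  calc ∫⁻ u in ball x₀ ρ, ENNReal.ofReal |g u| ∂volume
      = volume (ball x₀ ρ) * ((volume (ball x₀ ρ))⁻¹
          * ∫⁻ u in ball x₀ ρ, ENNReal.ofReal |g u| ∂volume) := by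
        rw [← mul_assoc, ENNReal.mul_inv_cancel h0 ht, one_mul]
    _ ≤ volume (ball x₀ ρ) * HLMaximal g x₀ := mul_le_mul_right h1 _

lemma lintegral_homothety (f : E → ℝ≥0∞) (hf : Measurable f) (x₀ : E) {s : ℝ} (hs : 0 < s) :
    ∫⁻ z, f (x₀ + s • (z - x₀)) ∂volume
      = ENNReal.ofReal ((s ^ n)⁻¹) * ∫⁻ z, f z ∂volume := by
  have step1 : ∫⁻ z, f (x₀ + s • (z - x₀)) ∂volume
      = ∫⁻ v, f (x₀ + s • v) ∂volume := by
    have := lintegral_add_right_eq_self (μ := (volume : Measure E))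
      (fun v => f (x₀ + s • v)) (-x₀)
    simpa [sub_eq_add_neg] using this
  have step2 : ∫⁻ v, f (x₀ + s • v) ∂volume
      = ENNReal.ofReal ((s ^ n)⁻¹) * ∫⁻ u, f (x₀ + u) ∂volume := by
    have hmeas : Measurable fun u : E => f (x₀ + u) :=
      hf.comp (measurable_const.add measurable_id)
    have hmap : ∫⁻ v, f (x₀ + s • v) ∂volume
        = ∫⁻ u, f (x₀ + u) ∂(Measure.map (s • ·) (volume : Measure E)) :=
      (lintegral_map hmeas (measurable_const_smul s)).symm
    rw [hmap, Measure.map_addHaar_smul (volume : Measure E) hs.ne', lintegral_smul_measure]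
    congr 1
    rw [finrank_euclideanSpace_fin, abs_of_nonneg (by positivity)]
  have step3 : ∫⁻ u, f (x₀ + u) ∂volume = ∫⁻ z, f z ∂volume :=
    lintegral_add_left_eq_self f x₀
  rw [step1, step2, step3]

lemma lintegral_ball_homothety (f : E → ℝ≥0∞) (hf : Measurable f) (x₀ : E) {s R : ℝ}
    (hs : 0 < s) :
    ∫⁻ z in ball x₀ R, f (x₀ + s • (z - x₀)) ∂volume
      = ENNReal.ofReal ((s ^ n)⁻¹) * ∫⁻ u in ball x₀ (s * R), f u ∂volume := by
  have hmem : ∀ z : E, (x₀ + s • (z - x₀) ∈ ball x₀ (s * R)) ↔ z ∈ ball x₀ R := by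
    intro z
    simp only [mem_ball, dist_eq_norm, add_sub_cancel_left, norm_smul, Real.norm_eq_abs,
      abs_of_pos hs]
    exact mul_lt_mul_iff_right₀ hs
  have key : ∀ z : E, (ball x₀ (s * R)).indicator f (x₀ + s • (z - x₀))
      = (ball x₀ R).indicator (fun z => f (x₀ + s • (z - x₀))) z := by
    intro z
    by_cases hz : z ∈ ball x₀ R
    · rw [indicator_of_mem hz, indicator_of_mem ((hmem z).2 hz)]
    · rw [indicator_of_notMem hz, indicator_of_notMem (fun h => hz ((hmem z).1 h))]
  rw [← lintegral_indicator measurableSet_ball, ← lintegral_indicator measurableSet_ball]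
  calc ∫⁻ z, (ball x₀ R).indicator (fun z => f (x₀ + s • (z - x₀))) z ∂volume
      = ∫⁻ z, (ball x₀ (s * R)).indicator f (x₀ + s • (z - x₀)) ∂volume := by
        simp_rw [key]
    _ = ENNReal.ofReal ((s ^ n)⁻¹) * ∫⁻ u, (ball x₀ (s * R)).indicator f u ∂volume :=
        lintegral_homothety _ (hf.indicator measurableSet_ball) x₀ hs

lemma scaled_ball_max (g : E → ℝ) (hg : Measurable g) (x₀ : E) {s R : ℝ}
    (hs : 0 < s) (hR : 0 < R) :
    ∫⁻ z in ball x₀ R, ENNReal.ofReal |g (x₀ + s • (z - x₀))| ∂volume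
      ≤ volume (ball x₀ R) * HLMaximal g x₀ := by
  have hsR : 0 < s * R := mul_pos hs hR
  rw [lintegral_ball_homothety (fun u => ENNReal.ofReal |g u|) hg.abs.ennreal_ofReal x₀ hs]
  calc ENNReal.ofReal ((s ^ n)⁻¹) * ∫⁻ u in ball x₀ (s * R), ENNReal.ofReal |g u| ∂volume
      ≤ ENNReal.ofReal ((s ^ n)⁻¹) * (volume (ball x₀ (s * R)) * HLMaximal g x₀) :=
        mul_le_mul_right (maximal_ball g x₀ hsR) _
    _ = volume (ball x₀ R) * HLMaximal g x₀ := by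
        rw [vol_ball x₀ hsR, vol_ball x₀ hR, ← mul_assoc, ← mul_assoc,
          ← ENNReal.ofReal_mul (by positivity)]
        congr 2
        rw [mul_pow, ← mul_assoc, inv_mul_cancel₀ (pow_ne_zero _ hs.ne'), one_mul]



lemma seg (φ : E → ℝ) (hφ : ContDiff ℝ 1 φ) (a b : E) :
    ENNReal.ofReal |φ b - φ a|
      ≤ ENNReal.ofReal ‖b - a‖
          * ∫⁻ s in Ioc (0:ℝ) 1, ENNReal.ofReal ‖fderiv ℝ φ (a + s • (b - a))‖ ∂volume := by
  have hder : ∀ s : ℝ, HasDerivAt (fun t : ℝ => φ (a + t • (b - a)))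
      ((fderiv ℝ φ (a + s • (b - a))) (b - a)) s := by
    intro s
    have h1 : HasDerivAt (fun t : ℝ => a + t • (b - a)) (b - a) s := by
      simpa using ((hasDerivAt_id s).smul_const (b - a)).const_add a
    exact ((hφ.differentiable one_ne_zero _).hasFDerivAt.comp_hasDerivAt s h1)
  have hcontf : Continuous fun u : E => fderiv ℝ φ u := hφ.continuous_fderiv one_ne_zero
  have hcont : Continuous fun s : ℝ => (fderiv ℝ φ (a + s • (b - a))) (b - a) := by
    have h2 : Continuous fun s : ℝ => a + s • (b - a) := by continuity
    exact (hcontf.comp h2).clm_apply continuous_const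
  have heq : φ b - φ a = ∫ s in Ioc (0:ℝ) 1, (fderiv ℝ φ (a + s • (b - a))) (b - a) := by
    rw [← intervalIntegral.integral_of_le (zero_le_one),
      intervalIntegral.integral_eq_sub_of_hasDerivAt (fun s _ => hder s)
        (hcont.intervalIntegrable 0 1)]
    simp
  rw [heq]
  calc ENNReal.ofReal |∫ s in Ioc (0:ℝ) 1, (fderiv ℝ φ (a + s • (b - a))) (b - a) ∂volume|
      = ‖∫ s in Ioc (0:ℝ) 1, (fderiv ℝ φ (a + s • (b - a))) (b - a) ∂volume‖ₑ :=
        (Real.enorm_eq_ofReal_abs _).symm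
    _ ≤ ∫⁻ s in Ioc (0:ℝ) 1, ‖(fderiv ℝ φ (a + s • (b - a))) (b - a)‖ₑ ∂volume :=
        enorm_integral_le_lintegral_enorm _
    _ ≤ ∫⁻ s in Ioc (0:ℝ) 1,
          ENNReal.ofReal ‖b - a‖ * ENNReal.ofReal ‖fderiv ℝ φ (a + s • (b - a))‖ ∂volume := by
        refine lintegral_mono fun s => ?_
        rw [Real.enorm_eq_ofReal_abs, ← ENNReal.ofReal_mul (norm_nonneg _)]
        refine ENNReal.ofReal_le_ofReal ?_
        calc |(fderiv ℝ φ (a + s • (b - a))) (b - a)|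
            = ‖(fderiv ℝ φ (a + s • (b - a))) (b - a)‖ := (Real.norm_eq_abs _).symm
          _ ≤ ‖fderiv ℝ φ (a + s • (b - a))‖ * ‖b - a‖ :=
              (fderiv ℝ φ (a + s • (b - a))).le_opNorm _
          _ = ‖b - a‖ * ‖fderiv ℝ φ (a + s • (b - a))‖ := mul_comm _ _
    _ = ENNReal.ofReal ‖b - a‖
          * ∫⁻ s in Ioc (0:ℝ) 1, ENNReal.ofReal ‖fderiv ℝ φ (a + s • (b - a))‖ ∂volume :=
        lintegral_const_mul' _ _ ENNReal.ofReal_ne_top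



lemma annuli_bound (F H : E → ℝ≥0∞) (x₀ : E) {ρ : ℝ} (hρ : 0 < ρ) (b : ℕ → ℝ≥0∞)
    (hb : ∀ k, b k ≠ ⊤)
    (h0 : ∀ z ∈ ball x₀ ρ, F z ≤ b 0)
    (hk : ∀ k : ℕ, ∀ z ∈ ball x₀ (2 ^ (k + 1) * ρ) \ ball x₀ (2 ^ k * ρ), F z ≤ b (k + 1)) :
    ∫⁻ z, F z * H z ∂volume
      ≤ ∑' k : ℕ, b k * ∫⁻ z in ball x₀ (2 ^ k * ρ), H z ∂volume := by
  set S : ℕ → Set E := fun k =>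
    match k with
    | 0 => ball x₀ ρ
    | (m + 1) => ball x₀ (2 ^ (m + 1) * ρ) \ ball x₀ (2 ^ m * ρ) with hS
  have hsub : ∀ k, S k ⊆ ball x₀ (2 ^ k * ρ) := by
    intro k
    match k with
    | 0 => simpa [hS] using ball_subset_ball (by linarith)
    | (m + 1) => exact diff_subset
  have hU : (⋃ k, S k) = univ := by
    classical
    refine eq_univ_of_forall fun z => ?_
    have hex : ∃ k : ℕ, z ∈ ball x₀ (2 ^ k * ρ) := by
      obtain ⟨k, hk2⟩ := pow_unbounded_of_one_lt (dist z x₀ / ρ) (one_lt_two : (1:ℝ) < 2)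
      exact ⟨k, by rw [mem_ball]; rw [div_lt_iff₀ hρ] at hk2; linarith⟩
    rw [mem_iUnion]
    rcases hke : Nat.find hex with _ | m
    · refine ⟨0, ?_⟩
      have := Nat.find_spec hex
      rw [hke] at this
      simpa [hS] using this
    · refine ⟨m + 1, ?_⟩
      have h1 := Nat.find_spec hex
      rw [hke] at h1
      have h2 : z ∉ ball x₀ (2 ^ m * ρ) := by
        have := Nat.find_min hex (by omega : m < Nat.find hex)
        exact this
      exact ⟨h1, h2⟩
  calc ∫⁻ z, F z * H z ∂volume = ∫⁻ z in ⋃ k, S k, F z * H z ∂volume := by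
        rw [hU, Measure.restrict_univ]
    _ ≤ ∑' k, ∫⁻ z in S k, F z * H z ∂volume := lintegral_iUnion_le _ _
    _ ≤ ∑' k : ℕ, b k * ∫⁻ z in ball x₀ (2 ^ k * ρ), H z ∂volume := by
        refine ENNReal.tsum_le_tsum fun k => ?_
        have hSk : MeasurableSet (S k) := by
          match k with
          | 0 => exact measurableSet_ball
          | (m + 1) => exact measurableSet_ball.diff measurableSet_ball
        have hFb : ∀ z ∈ S k, F z * H z ≤ b k * H z := by
          intro z hz
          refine mul_le_mul_left ?_ _
          match k with
          | 0 => exact h0 z hz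
          | (m + 1) => exact hk m z hz
        calc ∫⁻ z in S k, F z * H z ∂volume ≤ ∫⁻ z in S k, b k * H z ∂volume :=
              setLIntegral_mono' hSk hFb
          _ = b k * ∫⁻ z in S k, H z ∂volume := lintegral_const_mul' _ _ (hb k)
          _ ≤ b k * ∫⁻ z in ball x₀ (2 ^ k * ρ), H z ∂volume :=
              mul_le_mul_right (lintegral_mono_set (hsub k)) _

lemma four_pow (k : ℕ) : ((k : ℝ) + 1) ^ 2 ≤ 4 ^ k := by
  induction k with
  | zero => norm_num
  | succ m ih =>
    rw [pow_succ 4 m]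
    push_cast
    nlinarith [Nat.cast_nonneg (α := ℝ) m]

/-- `e`-factors: `ek c 0 = 1`, `ek c (k+1) = exp (-(4^k)/c)`. -/
noncomputable def ek (c : ℝ) : ℕ → ℝ := fun k =>
  match k with
  | 0 => 1
  | (m + 1) => Real.exp (-(4 ^ m) / c)

lemma ek_pos (c : ℝ) (k : ℕ) : 0 < ek c k := by
  match k with
  | 0 => norm_num [ek]
  | (m + 1) => exact Real.exp_pos _

/-- The master geometric constant. -/
noncomputable def Sconst (n : ℕ) (c : ℝ) : ℝ :=
  Real.exp ((((n : ℝ) + 1) * Real.log 2 + 1) ^ 2 * c) * (1 - Real.exp (-1))⁻¹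

lemma Sconst_pos (n : ℕ) (c : ℝ) : 0 < Sconst n c := by
  have h1 : Real.exp (-1) < 1 := Real.exp_lt_one_iff.2 (by norm_num)
  exact mul_pos (Real.exp_pos _) (inv_pos.2 (by linarith))

lemma sum_bound (n : ℕ) {c : ℝ} (hc : 0 < c) :
    ∑' k : ℕ, ENNReal.ofReal (ek c k * 2 ^ (k * (n + 1)))
      ≤ ENNReal.ofReal (Sconst n c) := by
  set a : ℝ := ((n : ℝ) + 1) * Real.log 2 + 1 with ha
  have hlog2 : 0 < Real.log 2 := Real.log_pos (by norm_num)
  have ha0 : 0 < a := by positivity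
  have key : ∀ k : ℕ, ek c k * 2 ^ (k * (n + 1))
      ≤ Real.exp (a ^ 2 * c) * Real.exp (-1) ^ k := by
    intro k
    have h2pow : (2 : ℝ) ^ (k * (n + 1)) = Real.exp ((k * (n + 1) : ℕ) * Real.log 2) := by
      rw [Real.exp_nat_mul, Real.exp_log (by norm_num)]
    have hek : ek c k ≤ Real.exp (a ^ 2 * c - a * k) := by
      match k with
      | 0 => simpa [ek] using Real.one_le_exp (by positivity)
      | (m + 1) =>
        have h4 : ((m : ℝ) + 1) ^ 2 ≤ 4 ^ m := four_pow m
        have hmain : a * ((m : ℝ) + 1) * c ≤ a ^ 2 * c ^ 2 + ((m : ℝ) + 1) ^ 2 := by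
          nlinarith [sq_nonneg (((m : ℝ) + 1) - a * c),
            mul_nonneg (mul_nonneg ha0.le hc.le) (by positivity : (0:ℝ) ≤ (m:ℝ) + 1)]
        have hineq : a * ((m : ℝ) + 1) ≤ a ^ 2 * c + ((m : ℝ) + 1) ^ 2 / c := by
          rw [← sub_nonneg]
          have heq2 : a ^ 2 * c + ((m : ℝ) + 1) ^ 2 / c - a * ((m : ℝ) + 1)
              = (a ^ 2 * c ^ 2 + ((m : ℝ) + 1) ^ 2 - a * ((m : ℝ) + 1) * c) / c := by
            field_simp
          rw [heq2]
          exact div_nonneg (by linarith) hc.le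
        have hineq2 : a * ((m : ℝ) + 1) - a ^ 2 * c ≤ (4 : ℝ) ^ m / c := by
          have : ((m : ℝ) + 1) ^ 2 / c ≤ (4 : ℝ) ^ m / c := by
            gcongr
          linarith
        have hunf : ek c (m + 1) = Real.exp (-(4 ^ m) / c) := rfl
        rw [hunf, Real.exp_le_exp, Nat.cast_add, Nat.cast_one, neg_div]
        linarith
    calc ek c k * 2 ^ (k * (n + 1))
        ≤ Real.exp (a ^ 2 * c - a * k) * Real.exp ((k * (n + 1) : ℕ) * Real.log 2) := by
          rw [← h2pow]
          exact mul_le_mul hek le_rfl (by positivity) (Real.exp_pos _).le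
      _ = Real.exp (a ^ 2 * c) * Real.exp (-1) ^ k := by
          rw [← Real.exp_add, ← Real.exp_nat_mul, ← Real.exp_add]
          congr 1
          push_cast
          rw [ha]
          ring
  calc ∑' k : ℕ, ENNReal.ofReal (ek c k * 2 ^ (k * (n + 1)))
      ≤ ∑' k : ℕ, ENNReal.ofReal (Real.exp (a ^ 2 * c) * Real.exp (-1) ^ k) :=
        ENNReal.tsum_le_tsum fun k => ENNReal.ofReal_le_ofReal (key k)
    _ = ENNReal.ofReal (Real.exp (a ^ 2 * c)) * ∑' k : ℕ, (ENNReal.ofReal (Real.exp (-1))) ^ k := by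
        rw [← ENNReal.tsum_mul_left]
        congr 1 with k
        rw [← ENNReal.ofReal_pow (Real.exp_nonneg _), ← ENNReal.ofReal_mul (Real.exp_nonneg _)]
    _ ≤ ENNReal.ofReal (Sconst n c) := by
        rw [ENNReal.tsum_geometric]
        have hlt : Real.exp (-1) < 1 := Real.exp_lt_one_iff.2 (by norm_num)
        have h1 : (1 : ℝ≥0∞) - ENNReal.ofReal (Real.exp (-1)) = ENNReal.ofReal (1 - Real.exp (-1)) := by
          rw [ENNReal.ofReal_sub _ (Real.exp_nonneg _), ENNReal.ofReal_one]
        rw [h1, ← ENNReal.ofReal_inv_of_pos (by linarith), ← ENNReal.ofReal_mul (Real.exp_nonneg _)]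
        exact le_rfl



lemma avg_bound (φ : E → ℝ) (hφ : ContDiff ℝ 1 φ) (x0 : E) {r : ℝ} (hr : 0 < r) :
    ENNReal.ofReal |φ x0 - ⨍ w in ball x0 (2 * r), φ w ∂volume|
      ≤ ENNReal.ofReal (2 * r) * HLMaximal (fun z => ‖fderiv ℝ φ z‖) x0 := by
  set g : E → ℝ := fun z => ‖fderiv ℝ φ z‖ with hgdef
  have hg : Measurable g := (hφ.continuous_fderiv one_ne_zero).norm.measurable
  set M := HLMaximal g x0 with hM
  set B : Set E := ball x0 (2 * r) with hBdef
  have h2r : (0:ℝ) < 2 * r := by linarith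
  have hB0 : volume B ≠ 0 := (measure_ball_pos volume x0 h2r).ne'
  have hBt : volume B ≠ ⊤ := measure_ball_lt_top.ne
  set μ' : Measure E := (volume B)⁻¹ • volume.restrict B with hμ'
  have hμ'univ : μ' univ = 1 := by
    rw [hμ', Measure.smul_apply, Measure.restrict_apply_univ, smul_eq_mul,
      ENNReal.inv_mul_cancel hB0 hBt]
  haveI : IsFiniteMeasure μ' := ⟨by rw [hμ'univ]; exact ENNReal.one_lt_top⟩
  have hint : Integrable φ μ' := by
    have h1 : IntegrableOn φ B volume :=
      (hφ.continuous.locallyIntegrable.integrableOn_isCompact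
        (isCompact_closedBall x0 (2 * r))).mono_set ball_subset_closedBall
    exact h1.smul_measure (ENNReal.inv_ne_top.2 hB0)
  have hsub : φ x0 - ⨍ w in B, φ w ∂volume = ∫ w, (φ x0 - φ w) ∂μ' := by
    rw [setAverage_eq' volume φ B, ← hμ', integral_sub (integrable_const (φ x0)) hint,
      integral_const, measureReal_def, hμ'univ]
    simp
  rw [hsub]
  have step1 : ENNReal.ofReal |∫ w, (φ x0 - φ w) ∂μ'|
      ≤ (volume B)⁻¹ * ∫⁻ w in B, ENNReal.ofReal |φ x0 - φ w| ∂volume := by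
    calc ENNReal.ofReal |∫ w, (φ x0 - φ w) ∂μ'|
        = ‖∫ w, (φ x0 - φ w) ∂μ'‖ₑ := (Real.enorm_eq_ofReal_abs _).symm
      _ ≤ ∫⁻ w, ‖φ x0 - φ w‖ₑ ∂μ' := enorm_integral_le_lintegral_enorm _
      _ = (volume B)⁻¹ * ∫⁻ w in B, ENNReal.ofReal |φ x0 - φ w| ∂volume := by
          rw [hμ', lintegral_smul_measure]
          congr 1
          refine lintegral_congr fun w => ?_
          rw [Real.enorm_eq_ofReal_abs]
  refine step1.trans ?_
  have step2 : ∫⁻ w in B, ENNReal.ofReal |φ x0 - φ w| ∂volume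
      ≤ ENNReal.ofReal (2 * r) * ∫⁻ w in B,
          (∫⁻ s in Ioc (0:ℝ) 1, ENNReal.ofReal ‖fderiv ℝ φ (x0 + s • (w - x0))‖ ∂volume)
            ∂volume := by
    rw [← lintegral_const_mul' _ _ ENNReal.ofReal_ne_top]
    refine setLIntegral_mono' measurableSet_ball fun w hw => ?_
    rw [abs_sub_comm]
    refine (seg φ hφ x0 w).trans ?_
    refine mul_le_mul_left (ENNReal.ofReal_le_ofReal ?_) _
    have := mem_ball.1 hw
    rw [← dist_eq_norm]
    exact this.le
  refine le_trans (mul_le_mul_right step2 _) ?_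
  have hswap : ∫⁻ w in B,
      (∫⁻ s in Ioc (0:ℝ) 1, ENNReal.ofReal ‖fderiv ℝ φ (x0 + s • (w - x0))‖ ∂volume) ∂volume
      = ∫⁻ s in Ioc (0:ℝ) 1,
          (∫⁻ w in B, ENNReal.ofReal ‖fderiv ℝ φ (x0 + s • (w - x0))‖ ∂volume) ∂volume := by
    refine lintegral_lintegral_swap ?_
    have hcontmap : Continuous fun p : E × ℝ => x0 + p.2 • (p.1 - x0) :=
      continuous_const.add ((continuous_snd).smul ((continuous_fst).sub continuous_const))
    exact (((hφ.continuous_fderiv one_ne_zero).norm.comp hcontmap).measurable.ennreal_ofReal).aemeasurable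
  rw [hswap]
  have step3 : ∫⁻ s in Ioc (0:ℝ) 1,
      (∫⁻ w in B, ENNReal.ofReal ‖fderiv ℝ φ (x0 + s • (w - x0))‖ ∂volume) ∂volume
      ≤ volume B * M := by
    have hbnd : ∀ s : ℝ, s ∈ Ioc (0:ℝ) 1 →
        (∫⁻ w in B, ENNReal.ofReal ‖fderiv ℝ φ (x0 + s • (w - x0))‖ ∂volume)
          ≤ volume B * M := by
      intro s hs
      have := scaled_ball_max g hg x0 hs.1 h2r
      simpa [hgdef, abs_norm] using this
    calc ∫⁻ s in Ioc (0:ℝ) 1,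
        (∫⁻ w in B, ENNReal.ofReal ‖fderiv ℝ φ (x0 + s • (w - x0))‖ ∂volume) ∂volume
        ≤ ∫⁻ _ in Ioc (0:ℝ) 1, volume B * M ∂volume :=
          setLIntegral_mono' measurableSet_Ioc hbnd
      _ = volume B * M := by
          rw [setLIntegral_const, Real.volume_Ioc]
          norm_num
  refine le_trans (mul_le_mul_right (mul_le_mul_right step3 _) _) ?_
  have heq : (volume B)⁻¹ * (ENNReal.ofReal (2 * r) * (volume B * M))
      = ENNReal.ofReal (2 * r) * M := by
    calc (volume B)⁻¹ * (ENNReal.ofReal (2 * r) * (volume B * M))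
        = (volume B)⁻¹ * volume B * (ENNReal.ofReal (2 * r) * M) := by ring
      _ = ENNReal.ofReal (2 * r) * M := by rw [ENNReal.inv_mul_cancel hB0 hBt, one_mul]
  exact heq.le


lemma real_id (C r Ek A : ℝ) (hr : r ≠ 0) (n : ℕ) :
    C * (r ^ n)⁻¹ * Ek * (A * (2 * r)) * (A * (2 * r)) ^ n
      = C * 2 ^ (n + 1) * r * (Ek * A ^ (n + 1)) := by
  field_simp [mul_pow]
  ring

end GKP

open GKP in
theorem gaussian_kernel_poincare (n : ℕ) (C c : ℝ) (hC : 0 < C) (hc : 0 < c) :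
    ∃ C' : ℝ, 0 < C' ∧
      ∀ (K : ℝ → EuclideanSpace ℝ (Fin n) → EuclideanSpace ℝ (Fin n) → ℝ),
        (∀ t : ℝ, 0 < t → ∀ y z, |K t y z|
          ≤ C * t ^ (-(n : ℝ)) * Real.exp (-(dist y z) ^ 2 / (c * t ^ 2))) →
      ∀ (φ : EuclideanSpace ℝ (Fin n) → ℝ), ContDiff ℝ 1 φ →
        (∃ L : ℝ≥0, LipschitzWith L φ) →
        LocallyIntegrable (fun z => ‖fderiv ℝ φ z‖) volume →
      ∀ (x0 : EuclideanSpace ℝ (Fin n)) (r : ℝ), 0 < r →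
      ∀ y, dist y x0 ≤ r →
        ENNReal.ofReal |∫ z, K r y z * (φ z - ⨍ w in ball x0 (2 * r), φ w ∂volume)|
          ≤ ENNReal.ofReal (C' * r) * HLMaximal (fun z => ‖fderiv ℝ φ z‖) x0 := by
  classical
  set vol01 : ℝ≥0∞ := volume (ball (0 : EuclideanSpace ℝ (Fin n)) 1) with hvol01
  have hvol01_0 : vol01 ≠ 0 := (measure_ball_pos volume _ one_pos).ne'
  have hvol01_t : vol01 ≠ ⊤ := measure_ball_lt_top.ne
  set V : ℝ := vol01.toReal with hV
  have hVpos : 0 < V := ENNReal.toReal_pos hvol01_0 hvol01_t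
  have hSpos : 0 < Sconst n c := Sconst_pos n c
  refine ⟨C * 2 ^ (n + 3) * V * Sconst n c,
    mul_pos (mul_pos (mul_pos hC (by positivity)) hVpos) hSpos, ?_⟩
  intro K hK φ hφ _ _ x0 r hr y hy
  set g : EuclideanSpace ℝ (Fin n) → ℝ := fun z => ‖fderiv ℝ φ z‖ with hgdef
  have hgc : Continuous g := (hφ.continuous_fderiv one_ne_zero).norm
  have hg : Measurable g := hgc.measurable
  set M := HLMaximal g x0 with hM
  set κ : ℝ := C * (r ^ n)⁻¹ with hκdef
  have hκpos : 0 < κ := by rw [hκdef]; positivity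
  have hKb : ∀ z, |K r y z| ≤ κ * Real.exp (-(dist y z) ^ 2 / (c * r ^ 2)) := by
    intro z
    have h1 := hK r hr y z
    rwa [Real.rpow_neg hr.le, Real.rpow_natCast] at h1
  set Gz : EuclideanSpace ℝ (Fin n) → ℝ≥0∞ :=
    fun z => ENNReal.ofReal (κ * Real.exp (-(dist y z) ^ 2 / (c * r ^ 2))) with hGzdef
  have hGzc : Continuous fun z : EuclideanSpace ℝ (Fin n) =>
      κ * Real.exp (-(dist y z) ^ 2 / (c * r ^ 2)) :=
    continuous_const.mul (Real.continuous_exp.comp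
      (((continuous_const.dist continuous_id).pow 2).neg.div_const _))
  have hGzm : Measurable Gz := hGzc.measurable.ennreal_ofReal
  set m : ℝ := ⨍ w in ball x0 (2 * r), φ w ∂volume with hmdef
  have h2r : (0:ℝ) < 2 * r := by linarith
  -- Pointwise bounds on the Gaussian factor
  have hGz_ball : ∀ z : EuclideanSpace ℝ (Fin n), Gz z ≤ ENNReal.ofReal κ := by
    intro z
    refine ENNReal.ofReal_le_ofReal ?_
    have hnonpos : -(dist y z) ^ 2 / (c * r ^ 2) ≤ 0 :=
      div_nonpos_iff.2 (Or.inr ⟨neg_nonpos.2 (sq_nonneg _), by positivity⟩)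
    have : Real.exp (-(dist y z) ^ 2 / (c * r ^ 2)) ≤ 1 := by
      calc Real.exp (-(dist y z) ^ 2 / (c * r ^ 2)) ≤ Real.exp 0 := Real.exp_le_exp.2 hnonpos
        _ = 1 := Real.exp_zero
    exact mul_le_of_le_one_right hκpos.le this
  have hGz_ann : ∀ (k : ℕ) (z : EuclideanSpace ℝ (Fin n)),
      z ∉ ball x0 (2 ^ k * (2 * r)) → Gz z ≤ ENNReal.ofReal (κ * ek c (k + 1)) := by
    intro k z hz
    have h2k : (1:ℝ) ≤ 2 ^ k := one_le_pow₀ (by norm_num)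
    have hdz : 2 ^ k * (2 * r) ≤ dist z x0 := by
      by_contra hcon
      exact hz (mem_ball.2 (lt_of_not_ge hcon))
    have hyz : (2:ℝ) ^ k * r ≤ dist y z := by
      have htri : dist z x0 ≤ dist z y + dist y x0 := dist_triangle z y x0
      have h1 : dist z y = dist y z := dist_comm z y
      nlinarith [hy, hdz]
    have hnum : (4:ℝ) ^ k * r ^ 2 ≤ (dist y z) ^ 2 := by
      have h4 : ((2:ℝ) ^ k * r) ^ 2 = 4 ^ k * r ^ 2 := by
        rw [mul_pow, ← pow_mul, mul_comm k 2, pow_mul]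
        norm_num
      have hpos : (0:ℝ) ≤ 2 ^ k * r := by positivity
      nlinarith [hyz, hpos]
    have harg : -(dist y z) ^ 2 / (c * r ^ 2) ≤ -(4 ^ k) / c := by
      rw [div_le_div_iff₀ (by positivity) hc]
      have := mul_le_mul_of_nonneg_right hnum hc.le
      nlinarith [this]
    have hek : ek c (k + 1) = Real.exp (-(4 ^ k) / c) := rfl
    rw [hek]
    exact ENNReal.ofReal_le_ofReal
      (mul_le_mul_of_nonneg_left (Real.exp_le_exp.2 harg) hκpos.le)
  -- Step 1 : pass to the Lebesgue integral
  have step1 : ENNReal.ofReal |∫ z, K r y z * (φ z - m)|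
      ≤ ∫⁻ z, Gz z * ENNReal.ofReal |φ z - m| ∂volume := by
    calc ENNReal.ofReal |∫ z, K r y z * (φ z - m)|
        = ‖∫ z, K r y z * (φ z - m)‖ₑ := (Real.enorm_eq_ofReal_abs _).symm
      _ ≤ ∫⁻ z, ‖K r y z * (φ z - m)‖ₑ ∂volume :=
          enorm_integral_le_lintegral_enorm _
      _ ≤ ∫⁻ z, Gz z * ENNReal.ofReal |φ z - m| ∂volume := by
          refine lintegral_mono fun z => ?_
          rw [Real.enorm_eq_ofReal_abs, abs_mul, hGzdef,
            ← ENNReal.ofReal_mul (by positivity)]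
          exact ENNReal.ofReal_le_ofReal
            (mul_le_mul_of_nonneg_right (hKb z) (abs_nonneg _))
  -- Step 2 : split the oscillation
  set D : ℝ≥0∞ := ENNReal.ofReal |φ x0 - m| with hD
  set T1 : ℝ≥0∞ := ∫⁻ z, Gz z * ENNReal.ofReal |φ z - φ x0| ∂volume with hT1
  have step2 : ∫⁻ z, Gz z * ENNReal.ofReal |φ z - m| ∂volume
      ≤ T1 + (∫⁻ z, Gz z ∂volume) * D := by
    have hmono : ∀ z, Gz z * ENNReal.ofReal |φ z - m|
        ≤ Gz z * ENNReal.ofReal |φ z - φ x0| + Gz z * D := by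
      intro z
      rw [← mul_add]
      refine mul_le_mul_right ?_ _
      rw [hD, ← ENNReal.ofReal_add (abs_nonneg _) (abs_nonneg _)]
      exact ENNReal.ofReal_le_ofReal (abs_sub_le _ _ _)
    calc ∫⁻ z, Gz z * ENNReal.ofReal |φ z - m| ∂volume
        ≤ ∫⁻ z, (Gz z * ENNReal.ofReal |φ z - φ x0| + Gz z * D) ∂volume :=
          lintegral_mono hmono
      _ = T1 + ∫⁻ z, Gz z * D ∂volume := by
          rw [lintegral_add_left (f := fun z => Gz z * ENNReal.ofReal |φ z - φ x0|) (hGzm.mul ((hφ.continuous.sub continuous_const).abs.measurable.ennreal_ofReal))]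
      _ = T1 + (∫⁻ z, Gz z ∂volume) * D := by
          rw [lintegral_mul_const' D _ ENNReal.ofReal_ne_top]
  -- Gaussian integral bound
  have gauss : ∫⁻ z, Gz z ∂volume
      ≤ ENNReal.ofReal (C * 2 ^ (n + 1)) * vol01 * ENNReal.ofReal (Sconst n c) := by
    have h1 : ∫⁻ z, Gz z ∂volume = ∫⁻ z, Gz z * (fun _ => (1:ℝ≥0∞)) z ∂volume := by
      simp
    rw [h1]
    have h2 := annuli_bound Gz (fun _ => (1:ℝ≥0∞)) x0 h2r
      (fun k => ENNReal.ofReal (κ * ek c k)) (fun k => ENNReal.ofReal_ne_top)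
      (fun z _ => by simpa [ek] using hGz_ball z)
      (fun k z hz => hGz_ann k z hz.2)
    refine h2.trans ?_
    have h3 : ∀ k : ℕ, ENNReal.ofReal (κ * ek c k)
          * ∫⁻ z in ball x0 (2 ^ k * (2 * r)), (fun _ => (1:ℝ≥0∞)) z ∂volume
        ≤ ENNReal.ofReal (C * 2 ^ (n + 1)) * vol01
            * ENNReal.ofReal (ek c k * 2 ^ (k * (n + 1))) := by
      intro k
      have hball : (0:ℝ) < 2 ^ k * (2 * r) := by positivity
      rw [setLIntegral_one, vol_ball x0 hball, ← hvol01]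
      have hre : κ * ek c k * (2 ^ k * (2 * r)) ^ n
          ≤ C * 2 ^ (n + 1) * (ek c k * 2 ^ (k * (n + 1))) := by
        have hek0 : 0 ≤ ek c k := (ek_pos c k).le
        have h1' : κ * ek c k * ((2:ℝ) ^ k * (2 * r)) ^ n
            = C * 2 ^ n * (ek c k * 2 ^ (k * n)) := by
          rw [hκdef, mul_pow, mul_pow, ← pow_mul]
          field_simp
        rw [h1']
        have hp1 : (2:ℝ) ^ n ≤ 2 ^ (n + 1) := by
          apply pow_le_pow_right₀ (by norm_num) (by omega)
        have hp2 : (2:ℝ) ^ (k * n) ≤ 2 ^ (k * (n + 1)) := by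
          apply pow_le_pow_right₀ (by norm_num) (by nlinarith)
        have hC2 : C * 2 ^ n ≤ C * 2 ^ (n + 1) := by nlinarith
        have hek2 : ek c k * 2 ^ (k * n) ≤ ek c k * 2 ^ (k * (n + 1)) := by nlinarith
        apply mul_le_mul hC2 hek2 (mul_nonneg hek0 (by positivity)) (by positivity)
      calc ENNReal.ofReal (κ * ek c k) * (ENNReal.ofReal ((2 ^ k * (2 * r)) ^ n) * vol01)
          = ENNReal.ofReal (κ * ek c k * (2 ^ k * (2 * r)) ^ n) * vol01 := by
            rw [← mul_assoc, ← ENNReal.ofReal_mul (mul_nonneg hκpos.le (ek_pos c k).le)]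
        _ ≤ ENNReal.ofReal (C * 2 ^ (n + 1) * (ek c k * 2 ^ (k * (n + 1)))) * vol01 :=
            mul_le_mul_left (ENNReal.ofReal_le_ofReal hre) _
        _ = ENNReal.ofReal (C * 2 ^ (n + 1)) * vol01
              * ENNReal.ofReal (ek c k * 2 ^ (k * (n + 1))) := by
            rw [ENNReal.ofReal_mul (by positivity)]
            ring
    calc ∑' k : ℕ, ENNReal.ofReal (κ * ek c k)
          * ∫⁻ z in ball x0 (2 ^ k * (2 * r)), (fun _ => (1:ℝ≥0∞)) z ∂volume
        ≤ ∑' k : ℕ, ENNReal.ofReal (C * 2 ^ (n + 1)) * vol01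
            * ENNReal.ofReal (ek c k * 2 ^ (k * (n + 1))) := ENNReal.tsum_le_tsum h3
      _ = ENNReal.ofReal (C * 2 ^ (n + 1)) * vol01
            * ∑' k : ℕ, ENNReal.ofReal (ek c k * 2 ^ (k * (n + 1))) := ENNReal.tsum_mul_left
      _ ≤ ENNReal.ofReal (C * 2 ^ (n + 1)) * vol01 * ENNReal.ofReal (Sconst n c) :=
          mul_le_mul_right (sum_bound n hc) _
  -- T1 bound
  set W : EuclideanSpace ℝ (Fin n) → ℝ≥0∞ :=
    fun z => Gz z * ENNReal.ofReal ‖z - x0‖ with hWdef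
  have hWm : Measurable W :=
    hGzm.mul ((continuous_id.sub continuous_const).norm.measurable.ennreal_ofReal)
  have hWtop : ∀ z, W z ≠ ⊤ := fun z =>
    ENNReal.mul_ne_top ENNReal.ofReal_ne_top ENNReal.ofReal_ne_top
  have hT1a : T1 ≤ ∫⁻ z, ∫⁻ s in Ioc (0:ℝ) 1,
      W z * ENNReal.ofReal ‖fderiv ℝ φ (x0 + s • (z - x0))‖ ∂volume ∂volume := by
    refine lintegral_mono fun z => ?_
    calc Gz z * ENNReal.ofReal |φ z - φ x0|
        ≤ Gz z * (ENNReal.ofReal ‖z - x0‖ * ∫⁻ s in Ioc (0:ℝ) 1,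
            ENNReal.ofReal ‖fderiv ℝ φ (x0 + s • (z - x0))‖ ∂volume) :=
          mul_le_mul_right (seg φ hφ x0 z) _
      _ = W z * ∫⁻ s in Ioc (0:ℝ) 1,
            ENNReal.ofReal ‖fderiv ℝ φ (x0 + s • (z - x0))‖ ∂volume := by
          rw [hWdef, mul_assoc]
      _ = ∫⁻ s in Ioc (0:ℝ) 1,
            W z * ENNReal.ofReal ‖fderiv ℝ φ (x0 + s • (z - x0))‖ ∂volume :=
          (lintegral_const_mul' _ _ (hWtop z)).symm
  have hcontmap : Continuous fun p : EuclideanSpace ℝ (Fin n) × ℝ =>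
      x0 + p.2 • (p.1 - x0) :=
    continuous_const.add (continuous_snd.smul (continuous_fst.sub continuous_const))
  have hswap : ∫⁻ z, ∫⁻ s in Ioc (0:ℝ) 1,
        W z * ENNReal.ofReal ‖fderiv ℝ φ (x0 + s • (z - x0))‖ ∂volume ∂volume
      = ∫⁻ s in Ioc (0:ℝ) 1, ∫⁻ z,
          W z * ENNReal.ofReal ‖fderiv ℝ φ (x0 + s • (z - x0))‖ ∂volume ∂volume := by
    refine lintegral_lintegral_swap ?_
    exact ((hWm.comp measurable_fst).mul
      ((hgc.comp hcontmap).measurable.ennreal_ofReal)).aemeasurable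
  -- the per-s estimate
  have hpers : ∀ s : ℝ, s ∈ Ioc (0:ℝ) 1 →
      ∫⁻ z, W z * ENNReal.ofReal ‖fderiv ℝ φ (x0 + s • (z - x0))‖ ∂volume
        ≤ ENNReal.ofReal (C * 2 ^ (n + 1) * r) * vol01 * M
            * ENNReal.ofReal (Sconst n c) := by
    intro s hs
    set Hs : EuclideanSpace ℝ (Fin n) → ℝ≥0∞ :=
      fun z => ENNReal.ofReal ‖fderiv ℝ φ (x0 + s • (z - x0))‖ with hHs
    have hb0 : ∀ z ∈ ball x0 (2 * r),
        W z ≤ ENNReal.ofReal (κ * ek c 0 * (2 ^ 0 * (2 * r))) := by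
      intro z hz
      have heq : κ * ek c 0 * ((2:ℝ) ^ 0 * (2 * r)) = κ * (2 * r) := by
        norm_num [ek]
      rw [heq, ENNReal.ofReal_mul hκpos.le]
      refine mul_le_mul' (hGz_ball z) (ENNReal.ofReal_le_ofReal ?_)
      rw [← dist_eq_norm]
      exact (mem_ball.1 hz).le
    have hbk : ∀ (k : ℕ), ∀ z ∈ ball x0 (2 ^ (k + 1) * (2 * r)) \ ball x0 (2 ^ k * (2 * r)),
        W z ≤ ENNReal.ofReal (κ * ek c (k + 1) * (2 ^ (k + 1) * (2 * r))) := by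
      intro k z hz
      rw [ENNReal.ofReal_mul (mul_nonneg hκpos.le (ek_pos c _).le)]
      refine mul_le_mul' (hGz_ann k z hz.2) (ENNReal.ofReal_le_ofReal ?_)
      rw [← dist_eq_norm]
      exact (mem_ball.1 hz.1).le
    have h2 := annuli_bound W Hs x0 h2r
      (fun k => ENNReal.ofReal (κ * ek c k * (2 ^ k * (2 * r))))
      (fun k => ENNReal.ofReal_ne_top) hb0 hbk
    refine h2.trans ?_
    have h3 : ∀ k : ℕ, ENNReal.ofReal (κ * ek c k * (2 ^ k * (2 * r)))
          * ∫⁻ z in ball x0 (2 ^ k * (2 * r)), Hs z ∂volume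
        ≤ ENNReal.ofReal (C * 2 ^ (n + 1) * r) * vol01 * M
            * ENNReal.ofReal (ek c k * 2 ^ (k * (n + 1))) := by
      intro k
      have hball : (0:ℝ) < 2 ^ k * (2 * r) := by positivity
      have hmax : ∫⁻ z in ball x0 (2 ^ k * (2 * r)), Hs z ∂volume
          ≤ volume (ball x0 (2 ^ k * (2 * r))) * M := by
        have := scaled_ball_max g hg x0 hs.1 hball
        rw [hM]
        refine le_trans (le_of_eq ?_) this
        refine lintegral_congr fun z => ?_
        rw [hHs, hgdef]
        simp [abs_norm]
      calc ENNReal.ofReal (κ * ek c k * (2 ^ k * (2 * r)))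
            * ∫⁻ z in ball x0 (2 ^ k * (2 * r)), Hs z ∂volume
          ≤ ENNReal.ofReal (κ * ek c k * (2 ^ k * (2 * r)))
              * (volume (ball x0 (2 ^ k * (2 * r))) * M) := mul_le_mul_right hmax _
        _ = ENNReal.ofReal (κ * ek c k * (2 ^ k * (2 * r)) * (2 ^ k * (2 * r)) ^ n)
              * vol01 * M := by
            rw [vol_ball x0 hball, ← hvol01,
              ENNReal.ofReal_mul (mul_nonneg (mul_nonneg hκpos.le (ek_pos c k).le) (by positivity : (0:ℝ) ≤ 2 ^ k * (2 * r)))]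
            ring
        _ = ENNReal.ofReal (C * 2 ^ (n + 1) * r * (ek c k * (2 ^ k) ^ (n + 1)))
              * vol01 * M := by
            rw [real_id C r (ek c k) (2 ^ k) hr.ne' n]
        _ = ENNReal.ofReal (C * 2 ^ (n + 1) * r) * vol01 * M
              * ENNReal.ofReal (ek c k * 2 ^ (k * (n + 1))) := by
            rw [ENNReal.ofReal_mul (by positivity), ← pow_mul]
            ring
    calc ∑' k : ℕ, ENNReal.ofReal (κ * ek c k * (2 ^ k * (2 * r)))
          * ∫⁻ z in ball x0 (2 ^ k * (2 * r)), Hs z ∂volume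
        ≤ ∑' k : ℕ, ENNReal.ofReal (C * 2 ^ (n + 1) * r) * vol01 * M
            * ENNReal.ofReal (ek c k * 2 ^ (k * (n + 1))) := ENNReal.tsum_le_tsum h3
      _ = ENNReal.ofReal (C * 2 ^ (n + 1) * r) * vol01 * M
            * ∑' k : ℕ, ENNReal.ofReal (ek c k * 2 ^ (k * (n + 1))) := ENNReal.tsum_mul_left
      _ ≤ ENNReal.ofReal (C * 2 ^ (n + 1) * r) * vol01 * M
            * ENNReal.ofReal (Sconst n c) := mul_le_mul_right (sum_bound n hc) _
  have hT1b : T1 ≤ ENNReal.ofReal (C * 2 ^ (n + 1) * r) * vol01 * M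
      * ENNReal.ofReal (Sconst n c) := by
    refine hT1a.trans ?_
    rw [hswap]
    calc ∫⁻ s in Ioc (0:ℝ) 1, ∫⁻ z,
          W z * ENNReal.ofReal ‖fderiv ℝ φ (x0 + s • (z - x0))‖ ∂volume ∂volume
        ≤ ∫⁻ _ in Ioc (0:ℝ) 1, (ENNReal.ofReal (C * 2 ^ (n + 1) * r) * vol01 * M
            * ENNReal.ofReal (Sconst n c)) ∂volume :=
          setLIntegral_mono' measurableSet_Ioc hpers
      _ = ENNReal.ofReal (C * 2 ^ (n + 1) * r) * vol01 * M
            * ENNReal.ofReal (Sconst n c) := by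
          rw [setLIntegral_const, Real.volume_Ioc]
          norm_num
  -- the average term
  have hDbound : D ≤ ENNReal.ofReal (2 * r) * M := avg_bound φ hφ x0 hr
  -- assembling
  have final : T1 + (∫⁻ z, Gz z ∂volume) * D
      ≤ ENNReal.ofReal (C * 2 ^ (n + 3) * V * Sconst n c * r) * M := by
    have hQ1 : T1 ≤ ENNReal.ofReal (C * 2 ^ (n + 1) * r * V * Sconst n c) * M := by
      refine hT1b.trans (le_of_eq ?_)
      rw [← ENNReal.ofReal_toReal hvol01_t, ← hV]
      rw [(by ring : ENNReal.ofReal (C * 2 ^ (n + 1) * r) * ENNReal.ofReal V * M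
            * ENNReal.ofReal (Sconst n c)
          = ENNReal.ofReal (C * 2 ^ (n + 1) * r) * ENNReal.ofReal V
            * ENNReal.ofReal (Sconst n c) * M)]
      rw [← ENNReal.ofReal_mul (by positivity : (0:ℝ) ≤ C * 2 ^ (n + 1) * r),
        ← ENNReal.ofReal_mul (mul_nonneg (by positivity : (0:ℝ) ≤ C * 2 ^ (n + 1) * r) hVpos.le)]
    have hQ2 : (∫⁻ z, Gz z ∂volume) * D
        ≤ ENNReal.ofReal (C * 2 ^ (n + 2) * r * V * Sconst n c) * M := by
      calc (∫⁻ z, Gz z ∂volume) * D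
          ≤ (ENNReal.ofReal (C * 2 ^ (n + 1)) * vol01 * ENNReal.ofReal (Sconst n c))
              * (ENNReal.ofReal (2 * r) * M) := mul_le_mul' gauss hDbound
        _ = ENNReal.ofReal (C * 2 ^ (n + 2) * r * V * Sconst n c) * M := by
            rw [← ENNReal.ofReal_toReal hvol01_t, ← hV]
            rw [← ENNReal.ofReal_mul (by positivity : (0:ℝ) ≤ C * 2 ^ (n + 1)),
              ← ENNReal.ofReal_mul (mul_nonneg (by positivity : (0:ℝ) ≤ C * 2 ^ (n + 1)) hVpos.le)]
            rw [(by ring : ENNReal.ofReal (C * 2 ^ (n + 1) * V * Sconst n c)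
                * (ENNReal.ofReal (2 * r) * M)
              = ENNReal.ofReal (C * 2 ^ (n + 1) * V * Sconst n c)
                * ENNReal.ofReal (2 * r) * M)]
            rw [← ENNReal.ofReal_mul
              (mul_nonneg (mul_nonneg (by positivity : (0:ℝ) ≤ C * 2 ^ (n + 1)) hVpos.le) hSpos.le)]
            congr 2
            ring
    calc T1 + (∫⁻ z, Gz z ∂volume) * D
        ≤ ENNReal.ofReal (C * 2 ^ (n + 1) * r * V * Sconst n c) * M
            + ENNReal.ofReal (C * 2 ^ (n + 2) * r * V * Sconst n c) * M :=
          add_le_add hQ1 hQ2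
      _ = ENNReal.ofReal (C * 2 ^ (n + 1) * r * V * Sconst n c
            + C * 2 ^ (n + 2) * r * V * Sconst n c) * M := by
          rw [ENNReal.ofReal_add
            (mul_nonneg (mul_nonneg (mul_nonneg (by positivity : (0:ℝ) ≤ C * 2 ^ (n + 1)) hr.le) hVpos.le) hSpos.le)
            (mul_nonneg (mul_nonneg (mul_nonneg (by positivity : (0:ℝ) ≤ C * 2 ^ (n + 2)) hr.le) hVpos.le) hSpos.le), add_mul]
      _ ≤ ENNReal.ofReal (C * 2 ^ (n + 3) * V * Sconst n c * r) * M := by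
          refine mul_le_mul_left (ENNReal.ofReal_le_ofReal ?_) _
          have key : (2:ℝ) ^ (n + 1) + 2 ^ (n + 2) ≤ 2 ^ (n + 3) := by
            have hx : (0:ℝ) ≤ 2 ^ n := by positivity
            have e1 : (2:ℝ) ^ (n + 1) = 2 ^ n * 2 := by ring
            have e2 : (2:ℝ) ^ (n + 2) = 2 ^ n * 4 := by ring
            have e3 : (2:ℝ) ^ (n + 3) = 2 ^ n * 8 := by ring
            rw [e1, e2, e3]
            linarith
          have base : (0:ℝ) ≤ C * r * V * Sconst n c :=
            mul_nonneg (mul_nonneg (mul_nonneg hC.le hr.le) hVpos.le) hSpos.le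
          calc C * 2 ^ (n + 1) * r * V * Sconst n c
                + C * 2 ^ (n + 2) * r * V * Sconst n c
              = (C * r * V * Sconst n c) * (2 ^ (n + 1) + 2 ^ (n + 2)) := by ring
            _ ≤ (C * r * V * Sconst n c) * 2 ^ (n + 3) :=
                mul_le_mul_of_nonneg_left key base
            _ = C * 2 ^ (n + 3) * V * Sconst n c * r := by ring
  exact step1.trans (step2.trans final)
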